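/- Let m ∈ ℕ, let Σ̂ > 0 and ψ ∈ ℝ, let p, q ∈ ℝᵐ, and let ψ_t, ψ₂, Σ̂_t, Σ̂₂ ∈ ℝ. Write v_τ := ∂_τ v(Σ̂,ψ), v_x := ∂_x v(Σ̂,ψ), v_{τx} := ∂_τ∂_x v(Σ̂,ψ), v_{ττ} := ∂²_τ v(Σ̂,ψ), v_{xx} := ∂²_x v(Σ̂,ψ), which exist. Assume (i) ψ_t + (1/2)(ψ₂ + |p|²) = 0, and (ii) (v_τ · Σ̂_t + v_x · ψ_t) + (1/2)(2 v_{τx} · ⟨q,p⟩ + v_τ · Σ̂₂ + v_{ττ} · |q|² + v_{xx} · |p|² + v_x · ψ₂) = 0, where ⟨·,·⟩ and |·| denote the Euclidean inner product and norm on ℝᵐ. Then the total implied variance equation holds: Σ̂_t + (1/2)(⟨q,p⟩ + Σ̂₂) − (1/16 + 1/(4Σ̂)) · |q|² + |p − (ψ/(2Σ̂)) q|² = 0. -/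

import Mathlib

open MeasureTheory

/-- Standard normal cumulative distribution function. -/
noncomputable def stdN (y : ℝ) : ℝ :=
  ∫ u in Set.Iio y, Real.exp (-u ^ 2 / 2) / Real.sqrt (2 * Real.pi)

/-- Standard normal density. -/
noncomputable def stdn (y : ℝ) : ℝ :=
  Real.exp (-y ^ 2 / 2) / Real.sqrt (2 * Real.pi)

/-- Unit-volatility Black–Scholes price in reduced variables. -/
noncomputable def bsv (τ x : ℝ) : ℝ :=
  Real.exp x * stdN (x / Real.sqrt τ + Real.sqrt τ / 2) -
    stdN (x / Real.sqrt τ - Real.sqrt τ / 2)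

lemma continuous_stdn : Continuous stdn := by
  unfold stdn; fun_prop

lemma stdn_pos (y : ℝ) : 0 < stdn y :=
  div_pos (Real.exp_pos _) (Real.sqrt_pos.mpr (by positivity))

lemma integrable_stdn : Integrable stdn := by
  have h := (integrable_exp_neg_mul_sq (by norm_num : (0:ℝ) < 1/2)).mul_const
    (Real.sqrt (2 * Real.pi))⁻¹
  have he : stdn = fun u : ℝ => Real.exp (-(1/2) * u ^ 2) * (Real.sqrt (2 * Real.pi))⁻¹ := by
    funext u; rw [stdn, div_eq_mul_inv]; congr 2; ring
  rw [he]; exact h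

lemma hasDerivAt_stdN (y : ℝ) : HasDerivAt stdN (stdn y) y := by
  have hint : stdN = fun z => (∫ u in Set.Iic (0:ℝ), stdn u) + ∫ u in (0:ℝ)..z, stdn u := by
    funext z
    have h1 : stdN z = ∫ u in Set.Iic z, stdn u := by
      rw [stdN]; exact setIntegral_congr_set Iio_ae_eq_Iic
    rw [h1, ← intervalIntegral.integral_Iic_sub_Iic integrable_stdn.integrableOn
      integrable_stdn.integrableOn]
    ring
  have hd : HasDerivAt (fun z => ∫ u in (0:ℝ)..z, stdn u) (stdn y) y :=
    intervalIntegral.integral_hasDerivAt_right integrable_stdn.intervalIntegrable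
      (continuous_stdn.stronglyMeasurableAtFilter _ _) continuous_stdn.continuousAt
  rw [hint]
  exact hd.const_add _

lemma hasDerivAt_stdn (y : ℝ) : HasDerivAt stdn (-y * stdn y) y := by
  have h1 : HasDerivAt (fun u : ℝ => -u ^ 2 / 2) (-y) y := by
    have := ((hasDerivAt_pow 2 y).neg.div_const 2)
    refine this.congr_deriv ?_; norm_num; ring
  have h2 := (h1.exp).div_const (Real.sqrt (2 * Real.pi))
  refine h2.congr_deriv ?_
  unfold stdn; ring

lemma stdn_key {τ x : ℝ} (hτ : 0 < τ) :
    Real.exp x * stdn (x / Real.sqrt τ + Real.sqrt τ / 2)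
      = stdn (x / Real.sqrt τ - Real.sqrt τ / 2) := by
  have hs0 : Real.sqrt τ ≠ 0 := ne_of_gt (Real.sqrt_pos.mpr hτ)
  rw [stdn, stdn, ← mul_div_assoc, ← Real.exp_add]
  congr 2
  field_simp
  rw [Real.sq_sqrt hτ.le]
  ring

lemma hasDerivAt_bsv_x {τ : ℝ} (hτ : 0 < τ) (x : ℝ) :
    HasDerivAt (fun y => bsv τ y)
      (Real.exp x * stdN (x / Real.sqrt τ + Real.sqrt τ / 2)) x := by
  set s := Real.sqrt τ with hsdef
  have hs0 : s ≠ 0 := ne_of_gt (Real.sqrt_pos.mpr hτ)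
  have hd1 : HasDerivAt (fun y : ℝ => y / s + s / 2) (1 / s) x := by
    simpa using ((hasDerivAt_id x).div_const s).add_const (s / 2)
  have hd2 : HasDerivAt (fun y : ℝ => y / s - s / 2) (1 / s) x := by
    simpa using ((hasDerivAt_id x).div_const s).sub_const (s / 2)
  have hN1 := (hasDerivAt_stdN (x / s + s / 2)).comp x hd1
  have hN2 := (hasDerivAt_stdN (x / s - s / 2)).comp x hd2
  have h := ((Real.hasDerivAt_exp x).mul hN1).sub hN2
  have hk := stdn_key (x := x) hτ
  rw [← hsdef] at hk
  show HasDerivAt (fun y => Real.exp y * stdN (y / s + s / 2) - stdN (y / s - s / 2)) _ x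
  refine h.congr_deriv ?_
  try simp only [Function.comp_apply]
  rw [show Real.exp x * (stdn (x / s + s / 2) * (1 / s))
      = Real.exp x * stdn (x / s + s / 2) * (1 / s) by ring, hk]
  ring

lemma hasDerivAt_sqrt_inv {τ : ℝ} (hτ : 0 < τ) (x : ℝ) :
    HasDerivAt (fun t => x / Real.sqrt t)
      (x * (-(1 / (2 * Real.sqrt τ)) / Real.sqrt τ ^ 2)) τ := by
  have hs0 : Real.sqrt τ ≠ 0 := ne_of_gt (Real.sqrt_pos.mpr hτ)
  have h := ((Real.hasDerivAt_sqrt (ne_of_gt hτ)).inv hs0).const_mul x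
  simpa only [div_eq_mul_inv, Pi.inv_apply] using h

lemma hasDerivAt_d1 {τ : ℝ} (hτ : 0 < τ) (x : ℝ) :
    HasDerivAt (fun t => x / Real.sqrt t + Real.sqrt t / 2)
      (x * (-(1 / (2 * Real.sqrt τ)) / Real.sqrt τ ^ 2) + (1 / (2 * Real.sqrt τ)) / 2) τ :=
  (hasDerivAt_sqrt_inv hτ x).add ((Real.hasDerivAt_sqrt (ne_of_gt hτ)).div_const 2)

lemma hasDerivAt_d2 {τ : ℝ} (hτ : 0 < τ) (x : ℝ) :
    HasDerivAt (fun t => x / Real.sqrt t - Real.sqrt t / 2)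
      (x * (-(1 / (2 * Real.sqrt τ)) / Real.sqrt τ ^ 2) - (1 / (2 * Real.sqrt τ)) / 2) τ :=
  (hasDerivAt_sqrt_inv hτ x).sub ((Real.hasDerivAt_sqrt (ne_of_gt hτ)).div_const 2)

lemma hasDerivAt_bsv_tau {τ : ℝ} (hτ : 0 < τ) (x : ℝ) :
    HasDerivAt (fun t => bsv t x)
      (stdn (x / Real.sqrt τ - Real.sqrt τ / 2) / (2 * Real.sqrt τ)) τ := by
  have hs0 : Real.sqrt τ ≠ 0 := ne_of_gt (Real.sqrt_pos.mpr hτ)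
  have hN1 := ((hasDerivAt_stdN _).comp τ (hasDerivAt_d1 hτ x)).const_mul (Real.exp x)
  have hN2 := (hasDerivAt_stdN _).comp τ (hasDerivAt_d2 hτ x)
  have h := hN1.sub hN2
  have hk := stdn_key (x := x) hτ
  show HasDerivAt (fun t => Real.exp x * stdN (x / Real.sqrt t + Real.sqrt t / 2)
      - stdN (x / Real.sqrt t - Real.sqrt t / 2)) _ τ
  refine h.congr_deriv ?_
  try simp only [Function.comp_apply]
  rw [show Real.exp x * (stdn (x / Real.sqrt τ + Real.sqrt τ / 2)
        * (x * (-(1 / (2 * Real.sqrt τ)) / Real.sqrt τ ^ 2) + 1 / (2 * Real.sqrt τ) / 2))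
      = Real.exp x * stdn (x / Real.sqrt τ + Real.sqrt τ / 2)
        * (x * (-(1 / (2 * Real.sqrt τ)) / Real.sqrt τ ^ 2) + 1 / (2 * Real.sqrt τ) / 2) by ring,
    hk]
  field_simp [Real.sq_sqrt hτ.le]
  ring

/-- The total implied variance equation: given the reduced future-price equation (i) and the
option pricing equation after the chain rule (ii), the total implied variance `Sig` satisfies
the quasi-linear path-dependent PDE of Theorem 5.2. -/
theorem total_implied_variance_equation (m : ℕ) (Sig ψ : ℝ) (hSig : 0 < Sig)
    (p q : EuclideanSpace ℝ (Fin m)) (ψt ψ2 Sigt Sig2 : ℝ)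
    (vτ vx vτx vττ vxx : ℝ)
    (hvτ : HasDerivAt (fun t => bsv t ψ) vτ Sig)
    (hvx : HasDerivAt (fun y => bsv Sig y) vx ψ)
    (hvτx : HasDerivAt (fun t => deriv (fun y => bsv t y) ψ) vτx Sig)
    (hvττ : HasDerivAt (fun t => deriv (fun s => bsv s ψ) t) vττ Sig)
    (hvxx : HasDerivAt (fun y => deriv (fun z => bsv Sig z) y) vxx ψ)
    (hi : ψt + (1 / 2) * (ψ2 + ‖p‖ ^ 2) = 0)
    (hii : (vτ * Sigt + vx * ψt) +
      (1 / 2) * (2 * vτx * (inner ℝ q p : ℝ) + vτ * Sig2 + vττ * ‖q‖ ^ 2 +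
        vxx * ‖p‖ ^ 2 + vx * ψ2) = 0) :
    Sigt + (1 / 2) * ((inner ℝ q p : ℝ) + Sig2) - (1 / 16 + 1 / (4 * Sig)) * ‖q‖ ^ 2 +
      ‖p - (ψ / (2 * Sig)) • q‖ ^ 2 = 0 := by
  obtain ⟨s, hs, rfl⟩ : ∃ s : ℝ, 0 < s ∧ Sig = s ^ 2 :=
    ⟨Real.sqrt Sig, Real.sqrt_pos.mpr hSig, (Real.sq_sqrt hSig.le).symm⟩
  have hs0 : s ≠ 0 := ne_of_gt hs
  have hss : Real.sqrt (s ^ 2) = s := Real.sqrt_sq hs.le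
  -- first and pure second derivatives
  have e1 := hvτ.unique (hasDerivAt_bsv_tau hSig ψ)
  have e2 := hvx.unique (hasDerivAt_bsv_x hSig ψ)
  -- mixed derivative vτx
  have hg := ((hasDerivAt_stdN (ψ / Real.sqrt (s ^ 2) + Real.sqrt (s ^ 2) / 2)).comp
      (s ^ 2) (hasDerivAt_d1 hSig ψ)).const_mul (Real.exp ψ)
  have hev1 : (fun t => deriv (fun y => bsv t y) ψ)
      =ᶠ[nhds (s ^ 2)] (fun t => Real.exp ψ *
        stdN (ψ / Real.sqrt t + Real.sqrt t / 2)) := by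
    filter_upwards [Ioi_mem_nhds hSig] with t ht
    exact (hasDerivAt_bsv_x ht ψ).deriv
  have e3 := hvτx.unique (hg.congr_of_eventuallyEq hev1)
  -- second derivative vττ
  have hA := (hasDerivAt_stdn (ψ / Real.sqrt (s ^ 2) - Real.sqrt (s ^ 2) / 2)).comp
      (s ^ 2) (hasDerivAt_d2 hSig ψ)
  have hB := (Real.hasDerivAt_sqrt (ne_of_gt hSig)).const_mul 2
  have hC := hA.div hB (by rw [hss]; positivity)
  have hev2 : (fun t => deriv (fun u => bsv u ψ) t)
      =ᶠ[nhds (s ^ 2)] (fun t =>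
        stdn (ψ / Real.sqrt t - Real.sqrt t / 2) / (2 * Real.sqrt t)) := by
    filter_upwards [Ioi_mem_nhds hSig] with t ht
    exact (hasDerivAt_bsv_tau ht ψ).deriv
  have e5 := hvττ.unique (hC.congr_of_eventuallyEq hev2)
  -- second derivative vxx
  have hfe : (fun y => deriv (fun z => bsv (s ^ 2) z) y)
      = fun y => Real.exp y * stdN (y / Real.sqrt (s ^ 2) + Real.sqrt (s ^ 2) / 2) :=
    funext fun y => (hasDerivAt_bsv_x hSig y).deriv
  have hd1ψ : HasDerivAt (fun y : ℝ => y / Real.sqrt (s ^ 2) + Real.sqrt (s ^ 2) / 2)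
      (1 / Real.sqrt (s ^ 2)) ψ := by
    simpa using ((hasDerivAt_id ψ).div_const (Real.sqrt (s ^ 2))).add_const
      (Real.sqrt (s ^ 2) / 2)
  have hx2 := (Real.hasDerivAt_exp ψ).mul
      ((hasDerivAt_stdN (ψ / Real.sqrt (s ^ 2) + Real.sqrt (s ^ 2) / 2)).comp ψ hd1ψ)
  rw [hfe] at hvxx
  have e4 := hvxx.unique hx2
  -- clean up
  simp only [hss, Function.comp_apply] at e1 e2 e3 e4 e5
  have hk2 : Real.exp ψ * stdn (ψ / s + s / 2) = stdn (ψ / s - s / 2) := by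
    have := stdn_key (x := ψ) hSig; rwa [hss] at this
  -- the three structural relations
  have r1 : vτx = vτ * (1 / 2 - ψ / s ^ 2) := by
    rw [e3, e1, ← hk2]; field_simp; ring
  have r2 : vxx = vx + 2 * vτ := by
    rw [e4, e2, e1, ← hk2]; field_simp
  have r3 : vττ = vτ * (ψ ^ 2 / (2 * (s ^ 2) ^ 2) - 1 / 8 - 1 / (2 * s ^ 2)) := by
    rw [e5, e1]; field_simp; ring_nf
  have hvτpos : 0 < vτ := by
    rw [e1]; exact div_pos (stdn_pos _) (by positivity)
  set IP := (inner ℝ q p : ℝ) with hIP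
  have h6 : vτ * (Sigt + (1 / 2) * Sig2 + (1 / 2 - ψ / s ^ 2) * IP
      + (ψ ^ 2 / (4 * (s ^ 2) ^ 2) - 1 / 16 - 1 / (4 * s ^ 2)) * ‖q‖ ^ 2 + ‖p‖ ^ 2) = 0 := by
    linear_combination hii - vx * hi - IP * r1 - (‖q‖ ^ 2 / 2) * r3 - (‖p‖ ^ 2 / 2) * r2
  have hBz := (mul_eq_zero.mp h6).resolve_left (ne_of_gt hvτpos)
  have hexp : ‖p - (ψ / (2 * s ^ 2)) • q‖ ^ 2
      = ‖p‖ ^ 2 - 2 * (ψ / (2 * s ^ 2)) * IP + (ψ / (2 * s ^ 2)) ^ 2 * ‖q‖ ^ 2 := by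
    rw [norm_sub_sq_real, real_inner_smul_right, norm_smul, real_inner_comm]
    simp only [Real.norm_eq_abs, mul_pow, sq_abs]
    ring
  rw [hexp]
  linear_combination hBz
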